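/- Every satisfiable TL[◆] formula (unary past temporal logic with only ◆, ⊟, Boolean connectives, and symbol predicates over a finite alphabet Σ) has a satisfying string of length at most polynomial in the size of the formula. -/

import Mathlib

/-- Formulas of the unary past temporal logic TL[◆]. -/
inductive TForm (α : Type) : Type
  | sym : α → TForm α
  | not : TForm α → TForm α
  | and : TForm α → TForm α → TForm α
  | prev : TForm α → TForm α
  | hist : TForm α → TForm α

def TForm.eval {α : Type} [DecidableEq α] : TForm α → List α → ℕ → Bool
  | .sym a, w, i => w[i - 1]? == some a
  | .not φ, w, i => !(φ.eval w i)
  | .and φ ψ, w, i => φ.eval w i && ψ.eval w i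
  | .prev φ, w, i => ((List.range i).filter (fun j => 0 < j)).any (fun j => φ.eval w j)
  | .hist φ, w, i => ((List.range (i + 1)).filter (fun j => 0 < j)).all (fun j => φ.eval w j)

def TForm.lang {α : Type} [DecidableEq α] (φ : TForm α) : Set (List α) :=
  {w | φ.eval w w.length = true}

def TForm.size {α : Type} : TForm α → ℕ
  | .sym _ => 1
  | .not φ => φ.size + 1
  | .and φ ψ => φ.size + ψ.size + 1
  | .prev φ => φ.size + 1
  | .hist φ => φ.size + 1

namespace TLSmall

def subf {α : Type} : TForm α → List (TForm α)
  | .sym a => [.sym a]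
  | .not φ => .not φ :: subf φ
  | .and φ ψ => .and φ ψ :: (subf φ ++ subf ψ)
  | .prev φ => .prev φ :: subf φ
  | .hist φ => .hist φ :: subf φ

lemma subf_length {α : Type} (φ : TForm α) : (subf φ).length = φ.size := by
  induction φ <;> simp [subf, TForm.size, *] <;> omega

lemma self_mem_subf {α : Type} (φ : TForm α) : φ ∈ subf φ := by
  cases φ <;> simp [subf]

variable {α : Type} [DecidableEq α]

lemma prev_eval_iff (χ : TForm α) (w : List α) (i : ℕ) :
    (TForm.prev χ).eval w i = true ↔ ∃ j, 0 < j ∧ j < i ∧ χ.eval w j = true := by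
  simp only [TForm.eval, List.any_eq_true, List.mem_filter, List.mem_range, decide_eq_true_eq]
  tauto

lemma hist_eval_iff (χ : TForm α) (w : List α) (i : ℕ) :
    (TForm.hist χ).eval w i = true ↔ ∀ j, 0 < j → j ≤ i → χ.eval w j = true := by
  simp only [TForm.eval, List.all_eq_true, List.mem_filter, List.mem_range, decide_eq_true_eq,
    Nat.lt_succ_iff]
  tauto

lemma eval_eraseIdx (w : List α) (k : ℕ) (hk : 0 < k)
    (φ : TForm α)
    (H : ∀ ψ ∈ subf φ, ∃ j, 0 < j ∧ j < k ∧ ψ.eval w j = ψ.eval w k) :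
    ∀ j, 0 < j → j ≠ k →
      φ.eval (w.eraseIdx (k-1)) (if j < k then j else j - 1) = φ.eval w j := by
  induction φ with
  | sym a =>
    intro j hj hjk
    rcases lt_or_gt_of_ne hjk with h | h
    · rw [if_pos h]
      simp only [TForm.eval, List.getElem?_eraseIdx]
      rw [if_pos (by omega)]
    · rw [if_neg (by omega)]
      simp only [TForm.eval, List.getElem?_eraseIdx]
      rw [if_neg (by omega)]
      have : j - 1 - 1 + 1 = j - 1 := by omega
      rw [this]
  | not χ ih =>
    intro j hj hjk
    have := ih (fun ψ hψ => H ψ (by simp [subf, hψ])) j hj hjk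
    simp only [TForm.eval, this]
  | and χ₁ χ₂ ih₁ ih₂ =>
    intro j hj hjk
    have h1 := ih₁ (fun ψ hψ => H ψ (by simp [subf, hψ])) j hj hjk
    have h2 := ih₂ (fun ψ hψ => H ψ (by simp [subf, hψ])) j hj hjk
    simp only [TForm.eval, h1, h2]
  | prev χ ih =>
    have ih' := ih (fun ψ hψ => H ψ (by simp [subf, hψ]))
    intro j hj hjk
    rw [Bool.eq_iff_iff, prev_eval_iff, prev_eval_iff]
    constructor
    · rintro ⟨j'', h0, hlt, he⟩
      have hlt' : (j < k ∧ j'' < j) ∨ (k < j ∧ j'' < j - 1) := by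
        rcases lt_or_gt_of_ne hjk with h | h
        · exact Or.inl ⟨h, by rwa [if_pos h] at hlt⟩
        · exact Or.inr ⟨h, by rwa [if_neg (by omega)] at hlt⟩
      rcases hlt' with ⟨h1, h2⟩ | ⟨h1, h2⟩ <;>
      · by_cases hc : j'' < k
        · refine ⟨j'', h0, by omega, ?_⟩
          have e := ih' j'' h0 (by omega); rw [if_pos hc] at e
          rw [← e]; exact he
        · refine ⟨j'' + 1, by omega, by omega, ?_⟩
          have e := ih' (j''+1) (by omega) (by omega)
          rw [if_neg (by omega)] at e
          simp only [Nat.add_sub_cancel] at e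
          rw [← e]; exact he
    · rintro ⟨j', h0, hlt, he⟩
      by_cases hc : j' = k
      · subst hc
        obtain ⟨j₀, hj₀0, hj₀k, hval⟩ := H χ (by simp [subf, self_mem_subf])
        have e := ih' j₀ hj₀0 (by omega); rw [if_pos hj₀k] at e
        refine ⟨j₀, hj₀0, ?_, by rw [e, hval]; exact he⟩
        rw [if_neg (by omega)]; omega
      · refine ⟨if j' < k then j' else j' - 1, by split <;> omega, ?_, ?_⟩
        · rcases lt_or_gt_of_ne hjk with h | h
          · rw [if_pos h, if_pos (show j' < k by omega)]; omega
          · rw [if_neg (show ¬ j < k by omega)]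
            by_cases hc2 : j' < k
            · rw [if_pos hc2]; omega
            · rw [if_neg hc2]; omega
        · rw [ih' j' h0 hc]; exact he
  | hist χ ih =>
    have ih' := ih (fun ψ hψ => H ψ (by simp [subf, hψ]))
    intro j hj hjk
    rw [Bool.eq_iff_iff, hist_eval_iff, hist_eval_iff]
    constructor
    · intro hall j' h0 hle
      by_cases hc : j' = k
      · subst hc
        obtain ⟨j₀, hj₀0, hj₀k, hval⟩ := H χ (by simp [subf, self_mem_subf])
        have e := ih' j₀ hj₀0 (by omega); rw [if_pos hj₀k] at e
        rw [← hval, ← e]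
        refine hall j₀ hj₀0 ?_
        rw [if_neg (by omega)]; omega
      · have e := ih' j' h0 hc
        rw [← e]
        refine hall _ (by split <;> omega) ?_
        rcases lt_or_gt_of_ne hjk with h | h
        · rw [if_pos h, if_pos (show j' < k by omega)]; omega
        · rw [if_neg (show ¬ j < k by omega)]
          by_cases hc2 : j' < k
          · rw [if_pos hc2]; omega
          · rw [if_neg hc2]; omega
    · intro hall j'' h0 hle
      have hle' : (j < k ∧ j'' ≤ j) ∨ (k < j ∧ j'' ≤ j - 1) := by
        rcases lt_or_gt_of_ne hjk with h | h
        · exact Or.inl ⟨h, by rwa [if_pos h] at hle⟩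
        · exact Or.inr ⟨h, by rwa [if_neg (by omega)] at hle⟩
      rcases hle' with ⟨h1, h2⟩ | ⟨h1, h2⟩ <;>
      · by_cases hc : j'' < k
        · have e := ih' j'' h0 (by omega); rw [if_pos hc] at e
          rw [e]
          exact hall _ h0 (by omega)
        · have e := ih' (j''+1) (by omega) (by omega)
          rw [if_neg (by omega)] at e
          simp only [Nat.add_sub_cancel] at e
          rw [e]
          exact hall _ (by omega) (by omega)

lemma prev_mono (χ : TForm α) (w : List α) {i i' : ℕ} (h : i ≤ i') :
    (TForm.prev χ).eval w i = true → (TForm.prev χ).eval w i' = true := by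
  rw [prev_eval_iff, prev_eval_iff]
  rintro ⟨j, h1, h2, h3⟩
  exact ⟨j, h1, by omega, h3⟩

lemma hist_anti (χ : TForm α) (w : List α) {i i' : ℕ} (h : i ≤ i') :
    (TForm.hist χ).eval w i' = true → (TForm.hist χ).eval w i = true := by
  rw [hist_eval_iff, hist_eval_iff]
  intro H j h1 h2
  exact H j h1 (by omega)

lemma countP_lt {β : Type} {p q : β → Bool} : ∀ {l : List β},
    (∀ a ∈ l, p a = true → q a = true) →
    ∀ a ∈ l, p a = false → q a = true → l.countP p < l.countP q := by
  intro l
  induction l with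
  | nil => simp
  | cons b t ih =>
    intro hmono a ha hp hq
    simp only [List.countP_cons]
    rcases List.mem_cons.mp ha with rfl | ha'
    · have h1 : t.countP p ≤ t.countP q :=
        List.countP_mono_left (fun x hx => hmono x (List.mem_cons_of_mem _ hx))
      rw [if_neg (by simp [hp]), if_pos (by simp [hq])]
      omega
    · have ht := ih (fun x hx => hmono x (List.mem_cons_of_mem _ hx)) a ha' hp hq
      by_cases hpb : p b = true
      · rw [if_pos (by simp [hpb]), if_pos (by simp [hmono b List.mem_cons_self hpb])]
        omega
      · rw [if_neg (by simp [hpb])]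
        by_cases hqb : q b = true
        · rw [if_pos (by simp [hqb])]; omega
        · rw [if_neg (by simp [hqb])]; omega

def N (φ : TForm α) (w : List α) (j : ℕ) : ℕ :=
  (subf φ).countP (fun ψ => (TForm.prev ψ).eval w (j+1)) +
  (subf φ).countP (fun ψ => !(TForm.hist ψ).eval w j)

lemma N_le (φ : TForm α) (w : List α) (j : ℕ) : N φ w j ≤ 2 * φ.size := by
  have h1 := List.countP_le_length (p := fun ψ => (TForm.prev ψ).eval w (j+1)) (l := subf φ)
  have h2 := List.countP_le_length (p := fun ψ => !(TForm.hist ψ).eval w j) (l := subf φ)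
  rw [subf_length] at h1 h2
  unfold N
  omega

lemma N_step (φ : TForm α) (w : List α) (k : ℕ) (hk : 2 ≤ k)
    (hbad : ¬ ∀ ψ ∈ subf φ, ∃ j, 0 < j ∧ j < k ∧ ψ.eval w j = ψ.eval w k) :
    N φ w (k-1) < N φ w k := by
  push_neg at hbad
  obtain ⟨ψ, hmem, hψ⟩ := hbad
  have hmono1 : ∀ χ ∈ subf φ, (TForm.prev χ).eval w (k-1+1) = true →
      (TForm.prev χ).eval w (k+1) = true := fun χ _ => prev_mono χ w (by omega)
  have hmono2 : ∀ χ ∈ subf φ, (!(TForm.hist χ).eval w (k-1)) = true →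
      (!(TForm.hist χ).eval w k) = true := by
    intro χ _ h
    simp only [Bool.not_eq_true'] at h ⊢
    cases hc : (TForm.hist χ).eval w k
    · rfl
    · rw [hist_anti χ w (by omega) hc] at h
      exact absurd h (by simp)
  cases hb : ψ.eval w k
  · -- eval w k = false : history flips
    have hpfalse : (!(TForm.hist ψ).eval w (k-1)) = false := by
      simp only [Bool.not_eq_false', Bool.not_eq_true]
      rw [hist_eval_iff]
      intro j h1 h2
      have := hψ j h1 (by omega)
      rw [hb] at this
      cases h : ψ.eval w j
      · exact absurd h this
      · rfl
    have hqtrue : (!(TForm.hist ψ).eval w k) = true := by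
      simp only [Bool.not_eq_true']
      rw [← Bool.not_eq_true, hist_eval_iff]
      intro hcon
      have := hcon k (by omega) le_rfl
      rw [hb] at this
      exact absurd this (by simp)
    have hlt := countP_lt hmono2 ψ hmem hpfalse hqtrue
    have hle := List.countP_mono_left (l := subf φ) hmono1
    unfold N
    omega
  · -- eval w k = true : prev flips
    have hpfalse : (TForm.prev ψ).eval w (k-1+1) = false := by
      rw [← Bool.not_eq_true, prev_eval_iff]
      rintro ⟨j, h1, h2, h3⟩
      have := hψ j h1 (by omega)
      rw [hb, h3] at this
      exact this rfl
    have hqtrue : (TForm.prev ψ).eval w (k+1) = true := by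
      rw [prev_eval_iff]
      exact ⟨k, by omega, by omega, hb⟩
    have hlt := countP_lt hmono1 ψ hmem hpfalse hqtrue
    have hle := List.countP_mono_left (l := subf φ) hmono2
    unfold N
    omega

lemma shrink (φ : TForm α) : ∀ n, ∀ w : List α, w.length ≤ n → w ≠ [] →
    φ.eval w w.length = true →
    ∃ w' : List α, w' ≠ [] ∧ φ.eval w' w'.length = true ∧ w'.length ≤ 2 * φ.size + 2 := by
  intro n
  induction n with
  | zero =>
    intro w hw hne _
    rw [Nat.le_zero, List.length_eq_zero_iff] at hw
    exact absurd hw hne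
  | succ n ih =>
    intro w hw hne hsat
    by_cases hlen : w.length ≤ 2 * φ.size + 2
    · exact ⟨w, hne, hsat, hlen⟩
    · push_neg at hlen
      have hgood : ∃ k, 2 ≤ k ∧ k ≤ w.length - 1 ∧
          ∀ ψ ∈ subf φ, ∃ j, 0 < j ∧ j < k ∧ ψ.eval w j = ψ.eval w k := by
        by_contra hcon
        push_neg at hcon
        have chain : ∀ d, d + 1 ≤ w.length - 1 → d ≤ N φ w (d + 1) := by
          intro d
          induction d with
          | zero => intro _; exact Nat.zero_le _
          | succ d ihd =>
            intro hd
            have h1 := ihd (by omega)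
            obtain ⟨ψ, hmem, hψ⟩ := hcon (d + 2) (by omega) (by omega)
            have h2 := N_step φ w (d + 2) (by omega) (by push_neg; exact ⟨ψ, hmem, hψ⟩)
            have e1 : d + 2 - 1 = d + 1 := by omega
            have e2 : d + 1 + 1 = d + 2 := by omega
            rw [e1] at h2
            rw [e2]
            omega
        have hc := chain (w.length - 2) (by omega)
        have hb := N_le φ w (w.length - 2 + 1)
        omega
      obtain ⟨k, hk2, hkm, Hgood⟩ := hgood
      have hsat' := eval_eraseIdx w k (by omega) φ Hgood w.length (by omega) (by omega)
      rw [if_neg (by omega)] at hsat'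
      have hlen' : (w.eraseIdx (k - 1)).length = w.length - 1 := by
        rw [List.length_eraseIdx, if_pos (by omega)]
      have hne' : w.eraseIdx (k - 1) ≠ [] := by
        intro hc
        rw [hc] at hlen'
        simp at hlen'
        omega
      refine ih (w.eraseIdx (k - 1)) (by omega) hne' ?_
      rw [hlen', hsat', hsat]

end TLSmall

/-- Small-model property for TL[◆]: every satisfiable formula (satisfied at the last
position of some nonempty string) has a satisfying string of length at most polynomial
in the size of the formula. -/
theorem tl_small_model :
    ∃ c : ℕ, ∀ (α : Type) [DecidableEq α] (φ : TForm α),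
      (∃ w : List α, w ≠ [] ∧ φ.eval w w.length = true) →
      ∃ w : List α, w ≠ [] ∧ φ.eval w w.length = true ∧
        w.length ≤ c * (φ.size + 1) ^ c := by
  refine ⟨2, ?_⟩
  intro α _ φ h
  obtain ⟨w, hne, hsat⟩ := h
  obtain ⟨w', h1, h2, h3⟩ := TLSmall.shrink φ w.length w le_rfl hne hsat
  refine ⟨w', h1, h2, ?_⟩
  have : 2 * φ.size + 2 ≤ 2 * (φ.size + 1) ^ 2 := by nlinarith
  omega
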